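/- Let A be an associative unital algebra over ℂ and q ∈ ℂ nonzero with q⁴ ≠ 1. Suppose E, F ∈ A and invertible K ∈ A satisfy KE = q²EK, KF = q^{−2}FK, and EF − FE = (K − K⁻¹)/(q − q⁻¹). Let n ∈ {0,1}, and set 𝔮' := q² if n = 1 and q^{−2} if n = 0, 𝐄 := qⁿ E Kⁿ, 𝐅 := q^{1−n} F K^{n−1}, 𝐊 := K² if n = 1 and K^{−2} if n = 0. Then the modified q-commutator relation holds: 𝐄𝐅 − (𝔮')⁻¹𝐅𝐄 = (1 − 𝐊)/(1 − 𝔮'). -/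

import Mathlib

theorem modified_quantum_group_EF_relation
    (A : Type*) [Ring A] [Algebra ℂ A] (q : ℂ) (hq : q ≠ 0) (hq4 : q ^ 4 ≠ 1)
    (E F : A) (K : Aˣ)
    (hKE : (K : A) * E = q ^ 2 • (E * (K : A)))
    (hKF : (K : A) * F = q ^ (-2 : ℤ) • (F * (K : A)))
    (hEF : E * F - F * E = (q - q⁻¹)⁻¹ • ((K : A) - ((K⁻¹ : Aˣ) : A)))
    (n : ℕ) (hn : n = 0 ∨ n = 1) :
    let 𝔮' : ℂ := if n = 1 then q ^ (2 : ℤ) else q ^ (-2 : ℤ)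
    let bE : A := q ^ n • (E * (K : A) ^ n)
    let bF : A := q ^ (1 - n) • (F * ((K ^ ((n : ℤ) - 1) : Aˣ) : A))
    let bK : A := ((K ^ (if n = 1 then (2 : ℤ) else -2) : Aˣ) : A)
    bE * bF - 𝔮'⁻¹ • (bF * bE) = (1 - 𝔮')⁻¹ • ((1 : A) - bK) := by
  have hq2 : q ^ 2 ≠ 1 := by
    intro h
    exact hq4 (by rw [show (4:ℕ) = 2*2 from rfl, pow_mul, h, one_pow])
  have hq2' : q ^ 2 ≠ 0 := pow_ne_zero _ hq
  have hc : q - q⁻¹ ≠ 0 := by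
    have h1 : q - q⁻¹ = (q ^ 2 - 1) / q := by field_simp
    rw [h1]
    exact div_ne_zero (sub_ne_zero.2 hq2) hq
  have h1q2 : 1 - (q ^ 2)⁻¹ ≠ 0 :=
    sub_ne_zero.2 fun h => hq2 (by rw [← inv_inv (q ^ 2), ← h, inv_one])
  have h1q2' : 1 - q ^ 2 ≠ 0 := sub_ne_zero.2 fun h => hq2 h.symm
  set k : A := (K : A) with hk
  set ki : A := ((K⁻¹ : Aˣ) : A) with hki
  have hmul : k * ki = 1 := Units.mul_inv K
  have hmul' : ki * k = 1 := Units.inv_mul K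
  have epow : (q : ℂ) ^ (-2 : ℤ) = (q ^ 2)⁻¹ := by
    rw [zpow_neg]; norm_cast
  have hkF : k * F = (q ^ 2)⁻¹ • (F * k) := by rw [hKF, epow]
  have hEki : E * ki = q ^ 2 • (ki * E) := by
    calc E * ki = ki * k * E * ki := by rw [hmul', one_mul]
    _ = ki * (k * E) * ki := by rw [mul_assoc ki k E]
    _ = ki * (q ^ 2 • (E * k)) * ki := by rw [hKE]
    _ = q ^ 2 • (ki * E * (k * ki)) := by
        rw [mul_smul_comm, smul_mul_assoc, ← mul_assoc ki E k, mul_assoc (ki * E) k ki]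
    _ = q ^ 2 • (ki * E) := by rw [hmul, mul_one]
  have hkiE : ki * E = (q ^ 2)⁻¹ • (E * ki) := by
    rw [hEki, smul_smul, inv_mul_cancel₀ hq2', one_smul]
  rcases hn with rfl | rfl <;> simp only [] <;> norm_num
  · -- n = 0
    have hK2 : ((K ^ (2:ℤ))⁻¹ : Aˣ) = K⁻¹ * K⁻¹ := by
      rw [← inv_zpow, show (2:ℤ) = ((2:ℕ):ℤ) from rfl, zpow_natCast, sq]
    rw [← hki, sq ki]
    have key : q • (E * (F * ki)) - q ^ 2 • q • (F * ki * E)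
        = (q * (q - q⁻¹)⁻¹) • (1 - ki * ki) := by
      rw [mul_assoc F ki E, hkiE, mul_smul_comm, smul_smul, smul_smul,
        show q ^ 2 * q * (q ^ 2)⁻¹ = q by field_simp,
        ← mul_assoc E F ki, ← mul_assoc F E ki, ← smul_sub, ← sub_mul, hEF,
        smul_mul_assoc, smul_smul, sub_mul, hmul]
    rw [key]
    congr 1
    field_simp
  · -- n = 1
    have hK2 : ((K ^ (2:ℤ) : Aˣ) : A) = k * k := by
      rw [show (2:ℤ) = ((2:ℕ):ℤ) from rfl, zpow_natCast, sq, Units.val_mul, ← hk]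
    rw [← hk, sq k]
    have key : q • (E * k * F) - (q ^ 2)⁻¹ • q • (F * (E * k))
        = (q * (q ^ 2)⁻¹ * (q - q⁻¹)⁻¹) • (k * k - 1) := by
      rw [mul_assoc E k F, hkF, mul_smul_comm, smul_smul, smul_smul,
        show (q ^ 2)⁻¹ * q = q * (q ^ 2)⁻¹ by ring,
        ← mul_assoc E F k, ← mul_assoc F E k, ← smul_sub, ← sub_mul, hEF,
        smul_mul_assoc, smul_smul, sub_mul, hmul']
    rw [key, show (1 : A) - k * k = -(k * k - 1) by rw [neg_sub], smul_neg, ← neg_smul]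
    congr 1
    rw [mul_assoc, ← mul_inv,
      show q ^ 2 * (q - q⁻¹) = q * (-(1 - q ^ 2)) by field_simp; ring,
      mul_inv, ← mul_assoc, mul_inv_cancel₀ hq, one_mul, ← neg_inv]
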